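/- The function 𝜅̃(θ) = (1/(4π))( -1/4 + (1/(2π)) · (θ - sin θ)/sin²(θ/2) ) is strictly increasing on (0, 2π). -/

import Mathlib

open Real

lemma aux_sin_gt (t : ℝ) (h1 : 0 < t) (h2 : t < π) : t * Real.cos t < Real.sin t := by
  rcases le_or_gt (Real.cos t) 0 with hc | hc
  · have hs := Real.sin_pos_of_pos_of_lt_pi h1 h2
    nlinarith
  · have ht : t < π / 2 := by
      by_contra h
      push_neg at h
      have := Real.cos_nonpos_of_pi_div_two_le_of_le h (by linarith [Real.pi_pos])
      linarith
    have := Real.lt_tan h1 ht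
    rw [Real.tan_eq_sin_div_cos] at this
    calc t * Real.cos t < (Real.sin t / Real.cos t) * Real.cos t := by
          exact mul_lt_mul_of_pos_right this hc
      _ = Real.sin t := by field_simp

/-- `𝜅̃(θ) = (1/(4π))(-1/4 + (1/(2π))(θ - sin θ)/sin²(θ/2))` is strictly increasing on `(0, 2π)`. -/
theorem kappaTilde_strictMono :
    StrictMonoOn
      (fun θ : ℝ => (1 / (4 * π)) *
        (-1 / 4 + (1 / (2 * π)) * ((θ - Real.sin θ) / (Real.sin (θ / 2)) ^ 2)))
      (Set.Ioo (0:ℝ) (2 * π)) := by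
  have hπ := Real.pi_pos
  have key : ∀ θ ∈ Set.Ioo (0:ℝ) (2 * π),
      HasDerivAt (fun θ : ℝ => (1 / (4 * π)) *
        (-1 / 4 + (1 / (2 * π)) * ((θ - Real.sin θ) / (Real.sin (θ / 2)) ^ 2)))
      ((1 / (4 * π)) * ((1 / (2 * π)) *
        (((1 - Real.cos θ) * (Real.sin (θ / 2)) ^ 2 -
          (θ - Real.sin θ) * (2 * Real.sin (θ / 2) ^ 1 * (Real.cos (θ / 2) * (1 / 2)))) /
          ((Real.sin (θ / 2)) ^ 2) ^ 2))) θ := by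
    intro θ hθ
    have hs : 0 < Real.sin (θ / 2) :=
      Real.sin_pos_of_pos_of_lt_pi (by linarith [hθ.1]) (by linarith [hθ.2])
    have hu : HasDerivAt (fun θ : ℝ => θ - Real.sin θ) (1 - Real.cos θ) θ :=
      (hasDerivAt_id θ).sub (Real.hasDerivAt_sin θ)
    have hhalf : HasDerivAt (fun θ : ℝ => θ / 2) (1 / 2) θ := by
      simpa using (hasDerivAt_id θ).div_const 2
    have hsin : HasDerivAt (fun θ : ℝ => Real.sin (θ / 2)) (Real.cos (θ / 2) * (1 / 2)) θ :=
      by have h := (Real.hasDerivAt_sin (θ / 2)).comp θ hhalf; exact h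
    have hv : HasDerivAt (fun θ : ℝ => (Real.sin (θ / 2)) ^ 2)
        (2 * Real.sin (θ / 2) ^ 1 * (Real.cos (θ / 2) * (1 / 2))) θ := hsin.pow 2
    have hg := hu.div hv (by positivity)
    exact ((hg.const_mul (1 / (2 * π))).const_add (-1 / 4 : ℝ)).const_mul (1 / (4 * π))
  apply strictMonoOn_of_hasDerivWithinAt_pos (convex_Ioo _ _)
    (fun θ hθ => ((key θ hθ).continuousAt.continuousWithinAt))
    (fun θ hθ => ((key θ (interior_subset hθ)).hasDerivWithinAt))
  intro θ hθ
  rw [interior_Ioo] at hθ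
  have hs : 0 < Real.sin (θ / 2) :=
    Real.sin_pos_of_pos_of_lt_pi (by linarith [hθ.1]) (by linarith [hθ.2])
  have hc2 : Real.sin (θ / 2) ^ 2 + Real.cos (θ / 2) ^ 2 = 1 := Real.sin_sq_add_cos_sq _
  have hsin2 : Real.sin θ = 2 * Real.sin (θ / 2) * Real.cos (θ / 2) := by
    conv_lhs => rw [show θ = 2 * (θ / 2) by ring, Real.sin_two_mul]
  have hcos2 : Real.cos θ = 1 - 2 * (Real.sin (θ / 2)) ^ 2 := by
    conv_lhs => rw [show θ = 2 * (θ / 2) by ring, Real.cos_two_mul]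
    nlinarith
  have haux := aux_sin_gt (θ / 2) (by linarith [hθ.1]) (by linarith [hθ.2])
  have hnum : 0 < (1 - Real.cos θ) * (Real.sin (θ / 2)) ^ 2 -
      (θ - Real.sin θ) * (2 * Real.sin (θ / 2) ^ 1 * (Real.cos (θ / 2) * (1 / 2))) := by
    have h1 : (1 - Real.cos θ) * (Real.sin (θ / 2)) ^ 2 -
        (θ - Real.sin θ) * (2 * Real.sin (θ / 2) ^ 1 * (Real.cos (θ / 2) * (1 / 2)))
        = 2 * Real.sin (θ / 2) * (Real.sin (θ / 2) - (θ / 2) * Real.cos (θ / 2)) := by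
      rw [hsin2, hcos2]; ring_nf; nlinarith [Real.sin_sq_add_cos_sq (θ * (1 / 2)), hc2]
    rw [h1]
    have : 0 < Real.sin (θ / 2) - (θ / 2) * Real.cos (θ / 2) := by linarith
    positivity
  positivity
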